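/- Constant probability of many heads after a linear number of steps (coin analysis for phase agents): Let n ≥ 2 be an integer and let (R_k)_{k≥0} be a sequence of real-valued random variables on a probability space equipped with a filtration (F_k)_{k≥0}, such that each R_k is F_k-measurable and integrable, 0 ≤ R_k ≤ 1 almost surely, and E[R_{k+1} | F_k] ≥ R_k + (1 - 2·R_k)/n almost surely for every k. Then for every natural number m with m ≥ 3n/2, P(R_m ≥ 1/3) ≥ 17/80. -/

import Mathlib

open MeasureTheory ProbabilityTheory Real

/-- Constant probability of many heads after a linear number of steps: if `(R_k)`
is adapted, `0 ≤ R_k ≤ 1` a.s., and `E[R_{k+1} | F_k] ≥ R_k + (1 - 2 R_k)/n` a.s.,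
then for every `m ≥ 3n/2`, `P(R_m ≥ 1/3) ≥ 17/80`. -/
theorem heads_fraction_constant_prob
    {Ω : Type*} {m0 : MeasurableSpace Ω} (μ : Measure Ω) [IsProbabilityMeasure μ]
    (ℱ : Filtration ℕ m0) (n : ℕ) (hn : 2 ≤ n)
    (R : ℕ → Ω → ℝ)
    (hadapted : Adapted ℱ R)
    (hint : ∀ k, Integrable (R k) μ)
    (hbound : ∀ k, ∀ᵐ ω ∂μ, 0 ≤ R k ω ∧ R k ω ≤ 1)
    (hdrift : ∀ k, ∀ᵐ ω ∂μ,
      R k ω + (1 - 2 * R k ω) / (n : ℝ) ≤ (μ[R (k + 1) | ℱ k]) ω) :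
    ∀ m : ℕ, 3 * (n : ℝ) / 2 ≤ (m : ℝ) →
      ENNReal.ofReal (17 / 80) ≤ μ {ω | 1 / 3 ≤ R m ω} := by
  intro m hm
  have hn0 : (0 : ℝ) < n := by positivity
  have hn2 : (2 : ℝ) ≤ n := by exact_mod_cast hn
  set a : ℕ → ℝ := fun k => ∫ ω, R k ω ∂μ with ha
  -- recursion on expectations
  have hrec : ∀ k, a k + (1 - 2 * a k) / n ≤ a (k + 1) := by
    intro k
    have hg : Integrable (fun ω => (1 - 2 * R k ω) / (n : ℝ)) μ :=
      ((integrable_const (1 : ℝ)).sub ((hint k).const_mul 2)).div_const _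
    have h1 : ∫ ω, (R k ω + (1 - 2 * R k ω) / n) ∂μ
        ≤ ∫ ω, (μ[R (k + 1) | ℱ k]) ω ∂μ :=
      integral_mono_ae ((hint k).add hg) integrable_condExp (hdrift k)
    rw [integral_condExp (ℱ.le k)] at h1
    have h2 : ∫ ω, (R k ω + (1 - 2 * R k ω) / n) ∂μ = a k + (1 - 2 * a k) / n := by
      rw [integral_add (hint k) hg, integral_div,
        integral_sub (integrable_const 1) ((hint k).const_mul 2),
        integral_const_mul, integral_const]
      simp [ha]
    rw [h2] at h1
    exact h1
  have hfac0 : (0 : ℝ) ≤ 1 - 2 / n := by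
    rw [sub_nonneg, div_le_one hn0]; exact hn2
  -- induction: 1/2 - a m ≤ (1 - 2/n)^m * (1/2)
  have hkey : ∀ k, 1 / 2 - a k ≤ (1 - 2 / (n : ℝ)) ^ k * (1 / 2) := by
    intro k
    induction k with
    | zero =>
      have h0 : 0 ≤ a 0 := integral_nonneg_of_ae ((hbound 0).mono fun ω h => h.1)
      simpa using by linarith
    | succ k ih =>
      have h' := hrec k
      have e1 : a k + (1 - 2 * a k) / (n : ℝ) = a k + 1 / (n : ℝ) - 2 / (n : ℝ) * a k := by
        field_simp
        ring
      rw [e1] at h'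
      have e2 : (1 - 2 / (n : ℝ)) * (1 / 2 - a k)
          = 1 / 2 - a k - 1 / (n : ℝ) + 2 / (n : ℝ) * a k := by ring
      have h3 : 1 / 2 - a (k + 1) ≤ (1 - 2 / (n : ℝ)) * (1 / 2 - a k) := by
        rw [e2]; linarith
      calc 1 / 2 - a (k + 1) ≤ (1 - 2 / (n : ℝ)) * (1 / 2 - a k) := h3
        _ ≤ (1 - 2 / (n : ℝ)) * ((1 - 2 / (n : ℝ)) ^ k * (1 / 2)) :=
            mul_le_mul_of_nonneg_left ih hfac0
        _ = (1 - 2 / (n : ℝ)) ^ (k + 1) * (1 / 2) := by ring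
  -- bound the factor by exp(-3) ≤ 1/20
  have hexp : (1 - 2 / (n : ℝ)) ^ m * (1 / 2) ≤ 1 / 40 := by
    have h1 : (1 - 2 / (n : ℝ)) ≤ Real.exp (-(2 / n)) := by
      have := Real.add_one_le_exp (-(2 / (n : ℝ)))
      linarith
    have h2 : (1 - 2 / (n : ℝ)) ^ m ≤ Real.exp (-(2 / n)) ^ m :=
      pow_le_pow_left₀ hfac0 h1 m
    rw [← Real.exp_nat_mul] at h2
    have h3 : (3 : ℝ) ≤ (m : ℝ) * (2 / n) := by
      rw [mul_div_assoc', le_div_iff₀ hn0]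
      linarith
    have h3' : (m : ℝ) * -(2 / n) ≤ -3 := by
      rw [mul_neg]; linarith
    have h4 : Real.exp ((m : ℝ) * -(2 / n)) ≤ Real.exp (-3) :=
      Real.exp_le_exp.mpr h3'
    have h5 : Real.exp (-3) ≤ 1 / 20 := by
      have he : (2.718 : ℝ) < Real.exp 1 := by linarith [Real.exp_one_gt_d9]
      have hcube : (2.718 : ℝ) ^ 3 < Real.exp 1 ^ 3 :=
        pow_lt_pow_left₀ he (by norm_num) (by norm_num)
      have h20 : (20 : ℝ) ≤ Real.exp 3 := by
        have : Real.exp 3 = Real.exp 1 ^ 3 := by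
          rw [← Real.exp_nat_mul]; norm_num
        rw [this]
        nlinarith
      rw [Real.exp_neg, ← one_div]
      exact one_div_le_one_div_of_le (by norm_num) h20
    linarith
  have ham : 19 / 40 ≤ a m := by linarith [hkey m, hexp]
  -- Markov inequality on 1 - R m
  have hint1 : Integrable (fun ω => 1 - R m ω) μ := (integrable_const 1).sub (hint m)
  have hnn : 0 ≤ᵐ[μ] fun ω => 1 - R m ω :=
    (hbound m).mono fun ω h => by simp [h.2]
  have hMarkov := mul_meas_ge_le_integral_of_nonneg hnn hint1 (2 / 3)
  have hintval : ∫ ω, (1 - R m ω) ∂μ ≤ 21 / 40 := by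
    rw [integral_sub (integrable_const 1) (hint m), integral_const]
    simp only [measure_univ, probReal_univ, ENNReal.toReal_one, smul_eq_mul, one_mul]
    linarith [ham]
  set A : Set Ω := {ω | R m ω < 1 / 3} with hA
  have hAmeas : MeasurableSet A :=
    measurableSet_lt (((hadapted m).mono (ℱ.le m) le_rfl)) measurable_const
  have hsub : A ⊆ {ω | 2 / 3 ≤ 1 - R m ω} := by
    intro ω h
    have h' : R m ω < 1 / 3 := h
    show (2 : ℝ) / 3 ≤ 1 - R m ω
    linarith
  have hfin : μ {ω | 2 / 3 ≤ 1 - R m ω} ≠ ⊤ := measure_ne_top μ _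
  have hA' : (μ A).toReal ≤ 63 / 80 := by
    have h6 : (μ A).toReal ≤ (μ {ω | 2 / 3 ≤ 1 - R m ω}).toReal :=
      ENNReal.toReal_mono hfin (measure_mono hsub)
    linarith [hMarkov, hintval, h6, measureReal_def μ {ω | 2 / 3 ≤ 1 - R m ω}]
  have hcompl : {ω | 1 / 3 ≤ R m ω} = Aᶜ := by
    ext ω; simp [hA, not_lt]
  rw [hcompl]
  have h7 : (μ Aᶜ).toReal = 1 - (μ A).toReal := by
    rw [prob_compl_eq_one_sub hAmeas,
      ENNReal.toReal_sub_of_le prob_le_one ENNReal.one_ne_top, ENNReal.toReal_one]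
  refine ENNReal.ofReal_le_of_le_toReal ?_
  rw [h7]; linarith
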